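/- arXiv:1607.08274 — 3 statements merged into one kernel-verified Lean document; each statement's English description precedes it below -/
import Mathlib

section
/- Define q_r(x,h) = ∫ t^r K(t) ∫₀¹ (f^{(r)}(x - h t w) - f^{(r)}(x)) (1-w)^{r-1} dw dt. Then for almost every x, q_r(x,h) is finite for every h > 0 and q_r(x,h) → 0 as h → 0⁺. -/
open MeasureTheory Real Filter

theorem aux2 (K g : ℝ → ℝ) (r : ℕ)
    (hKnonneg : ∀ t, 0 ≤ K t) (hKmeas : Measurable K)
    (hKmom : Integrable (fun t => |t| ^ r * K t))
    (hgc : Continuous g) (hgint : Integrable g) (x : ℝ) :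
    (∀ h : ℝ, 0 < h → Integrable (fun t : ℝ => t ^ r * K t *
        ∫ w in (0:ℝ)..1, (g (x - h * t * w) - g x) * (1 - w) ^ (r - 1))) ∧
      Tendsto (fun h : ℝ => ∫ t : ℝ, t ^ r * K t *
        ∫ w in (0:ℝ)..1, (g (x - h * t * w) - g x) * (1 - w) ^ (r - 1))
        (nhdsWithin 0 (Set.Ioi 0)) (nhds 0) := by
  set P : ℝ → ℝ := fun c => ∫ w in (0:ℝ)..1, (g (x - c * w) - g x) * (1 - w) ^ (r - 1)
    with hPdef
  have hPc : Continuous P := by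
    apply intervalIntegral.continuous_parametric_intervalIntegral_of_continuous'
      (f := fun c w => (g (x - c * w) - g x) * (1 - w) ^ (r - 1)) (μ := volume)
    exact ((hgc.comp (continuous_const.sub (continuous_fst.mul continuous_snd))).sub
      continuous_const).mul ((continuous_const.sub continuous_snd).pow _)
  have hP0 : P 0 = 0 := by simp [hPdef]
  -- bounds on local integrals of |g|
  have hgabs : Integrable (fun u : ℝ => |g (x - u)|) := (hgint.comp_sub_left x).abs
  obtain ⟨B₀, hB₀⟩ := (isCompact_Icc (a := x - 1) (b := x + 1)).exists_bound_of_continuousOn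
    hgc.continuousOn
  set B : ℝ := max B₀ 0 with hBdef
  set I₁ : ℝ := ∫ u, |g u| with hI₁def
  have hI₁nonneg : 0 ≤ I₁ := integral_nonneg fun u => abs_nonneg _
  set C₁ : ℝ := max (2 * B) I₁ with hC₁def
  have hC₁nonneg : 0 ≤ C₁ := le_trans hI₁nonneg (le_max_right _ _)
  have hIcc : ∀ a : ℝ, 0 < a → ∫ u in Set.Icc (-a) a, |g (x - u)| ≤ C₁ * a := by
    intro a ha
    rcases le_or_gt a 1 with h1 | h1
    · have hvol : volume (Set.Icc (-a) a) < ⊤ := measure_Icc_lt_top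
      have key := norm_setIntegral_le_of_norm_le_const (μ := volume) (s := Set.Icc (-a) a)
        (f := fun u => |g (x - u)|) (C := B) hvol ?_
      · have h2 : ∫ u in Set.Icc (-a) a, |g (x - u)| ≤ B * (volume (Set.Icc (-a) a)).toReal :=
          le_trans (le_abs_self _) key
        have h3 : (volume (Set.Icc (-a) a)).toReal = 2 * a := by
          rw [Real.volume_Icc, ENNReal.toReal_ofReal (by linarith)]; ring
        rw [h3] at h2
        refine h2.trans ?_
        have h6 : 2 * B ≤ C₁ := le_max_left _ _
        nlinarith [le_trans (le_max_right B₀ 0 : (0:ℝ) ≤ B) (le_refl B)]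
      · intro u hu
        have h4 : x - u ∈ Set.Icc (x - 1) (x + 1) := by
          simp only [Set.mem_Icc] at hu ⊢; constructor <;> linarith
        have h5 : |g (x - u)| ≤ B := by
          rw [hBdef]; exact (hB₀ _ h4).trans (le_max_left B₀ 0)
        calc ‖|g (x - u)|‖ = |g (x - u)| := by rw [Real.norm_eq_abs, abs_abs]
          _ ≤ B := h5
    · have h2 : ∫ u in Set.Icc (-a) a, |g (x - u)| ≤ ∫ u, |g (x - u)| :=
        setIntegral_le_integral hgabs (ae_of_all _ fun u => abs_nonneg _)
      have h3 : ∫ u, |g (x - u)| = I₁ := integral_sub_left_eq_self (fun u => |g u|) volume x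
      rw [h3] at h2
      refine h2.trans ?_
      calc I₁ ≤ C₁ := le_max_right _ _
        _ ≤ C₁ * a := le_mul_of_one_le_right hC₁nonneg h1.le
  -- bound on the inner integral
  set D : ℝ := C₁ + |g x| with hDdef
  have hDnonneg : 0 ≤ D := by positivity
  have hPbound : ∀ c : ℝ, |P c| ≤ D := by
    intro c
    rcases eq_or_ne c 0 with rfl | hc
    · rw [hP0, abs_zero]; exact hDnonneg
    · have cont1 : Continuous fun w : ℝ => |g (x - c * w)| :=
        (hgc.comp (continuous_const.sub (continuous_const.mul continuous_id))).abs
      have step1 : |P c| ≤ ∫ w in (0:ℝ)..1, |(g (x - c * w) - g x) * (1 - w) ^ (r - 1)| :=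
        intervalIntegral.abs_integral_le_integral_abs zero_le_one
      have step2 : (∫ w in (0:ℝ)..1, |(g (x - c * w) - g x) * (1 - w) ^ (r - 1)|)
          ≤ ∫ w in (0:ℝ)..1, (|g (x - c * w)| + |g x|) := by
        apply intervalIntegral.integral_mono_on zero_le_one
        · exact (((hgc.comp (continuous_const.sub (continuous_const.mul continuous_id))).sub
            continuous_const).mul
            ((continuous_const.sub continuous_id).pow _)).abs.intervalIntegrable _ _
        · exact (cont1.add continuous_const).intervalIntegrable _ _
        · intro w hw
          rw [abs_mul]
          have h1 : |(1 - w) ^ (r - 1)| ≤ 1 := by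
            rw [abs_pow]
            apply pow_le_one₀ (abs_nonneg _)
            rw [abs_le]; exact ⟨by linarith [hw.2], by linarith [hw.1]⟩
          calc |g (x - c * w) - g x| * |(1 - w) ^ (r - 1)|
              ≤ (|g (x - c * w)| + |g x|) * 1 := by
                apply mul_le_mul ?_ h1 (abs_nonneg _) (by positivity)
                simpa [Real.norm_eq_abs] using norm_sub_le (g (x - c * w)) (g x)
            _ = |g (x - c * w)| + |g x| := mul_one _
      have step3 : (∫ w in (0:ℝ)..1, (|g (x - c * w)| + |g x|))
          = (∫ w in (0:ℝ)..1, |g (x - c * w)|) + |g x| := by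
        rw [intervalIntegral.integral_add (cont1.intervalIntegrable _ _)
          (intervalIntegrable_const)]
        simp
      have step4 : (∫ w in (0:ℝ)..1, |g (x - c * w)|) ≤ C₁ := by
        have e1 : (∫ w in (0:ℝ)..1, |g (x - c * w)|)
            = c⁻¹ * ∫ u in (0:ℝ)..c, |g (x - u)| := by
          simpa using intervalIntegral.integral_comp_mul_left (fun u => |g (x - u)|) hc
            (a := 0) (b := 1)
        rcases hc.lt_or_gt with hneg | hpos
        · have e2 : (∫ u in (0:ℝ)..c, |g (x - u)|) = -∫ u in Set.Ioc c 0, |g (x - u)| :=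
            intervalIntegral.integral_of_ge hneg.le
          have e3 : (∫ u in Set.Ioc c 0, |g (x - u)|)
              ≤ ∫ u in Set.Icc (-(-c)) (-c), |g (x - u)| := by
            apply setIntegral_mono_set hgabs.integrableOn
              (ae_of_all _ fun u => abs_nonneg _)
            apply Filter.Eventually.of_forall
            intro u hu
            exact ⟨by simpa using hu.1.le, by linarith [hu.2]⟩
          have e4 := (e3.trans (hIcc (-c) (by linarith)))
          rw [e1, e2]
          have : c⁻¹ * -∫ u in Set.Ioc c 0, |g (x - u)|
              = (-c)⁻¹ * ∫ u in Set.Ioc c 0, |g (x - u)| := by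
            rw [inv_neg]; ring
          rw [this]
          calc (-c)⁻¹ * ∫ u in Set.Ioc c 0, |g (x - u)|
              ≤ (-c)⁻¹ * (C₁ * (-c)) := by
                apply mul_le_mul_of_nonneg_left e4 (inv_nonneg.mpr (by linarith))
            _ = C₁ := by field_simp
        · have e2 : (∫ u in (0:ℝ)..c, |g (x - u)|) = ∫ u in Set.Ioc 0 c, |g (x - u)| :=
            intervalIntegral.integral_of_le hpos.le
          have e3 : (∫ u in Set.Ioc 0 c, |g (x - u)|)
              ≤ ∫ u in Set.Icc (-c) c, |g (x - u)| := by
            apply setIntegral_mono_set hgabs.integrableOn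
              (ae_of_all _ fun u => abs_nonneg _)
            apply Filter.Eventually.of_forall
            intro u hu
            exact ⟨by linarith [hu.1], hu.2⟩
          have e4 := e3.trans (hIcc c hpos)
          rw [e1, e2]
          calc c⁻¹ * ∫ u in Set.Ioc 0 c, |g (x - u)|
              ≤ c⁻¹ * (C₁ * c) := by
                apply mul_le_mul_of_nonneg_left e4 (inv_nonneg.mpr hpos.le)
            _ = C₁ := by field_simp
      calc |P c| ≤ _ := step1
        _ ≤ _ := step2
        _ = _ := step3
        _ ≤ C₁ + |g x| := by linarith
  -- measurability and domination of the outer integrand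
  have hmeasF : ∀ h : ℝ, AEStronglyMeasurable (fun t => t ^ r * K t * P (h * t)) volume :=
    fun h => (((measurable_id.pow_const r).mul hKmeas).mul
      ((hPc.comp (continuous_const.mul continuous_id)).measurable)).aestronglyMeasurable
  have hboundF : ∀ h t : ℝ, ‖t ^ r * K t * P (h * t)‖ ≤ |t| ^ r * K t * D := by
    intro h t
    rw [Real.norm_eq_abs, abs_mul, abs_mul, abs_pow, abs_of_nonneg (hKnonneg t)]
    exact mul_le_mul_of_nonneg_left (hPbound _) (mul_nonneg (by positivity) (hKnonneg t))
  have hbddint : Integrable (fun t : ℝ => |t| ^ r * K t * D) := hKmom.mul_const D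
  constructor
  · intro h _
    exact hbddint.mono' (hmeasF h) (ae_of_all _ (hboundF h))
  · have key := tendsto_integral_filter_of_dominated_convergence
      (μ := volume) (l := nhdsWithin (0:ℝ) (Set.Ioi 0))
      (F := fun h t => t ^ r * K t * P (h * t)) (f := fun _ => (0:ℝ))
      (fun t => |t| ^ r * K t * D)
      (Filter.Eventually.of_forall hmeasF)
      (Filter.Eventually.of_forall fun h => ae_of_all _ (hboundF h))
      hbddint
      (ae_of_all _ fun t => by
        have hcont : Continuous fun h : ℝ => t ^ r * K t * P (h * t) :=
          continuous_const.mul (hPc.comp (continuous_id.mul continuous_const))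
        have h1 := (hcont.tendsto 0).mono_left (nhdsWithin_le_nhds (s := Set.Ioi 0))
        simpa [hP0] using h1)
    simpa using key


/-- with `q_r(x,h) = ∫ t^r K(t) ∫₀¹ (f⁽ʳ⁾(x-htw) - f⁽ʳ⁾(x))(1-w)^{r-1} dw dt`,
for almost every `x` the defining integrand is integrable (so `q_r(x,h)` is finite) for every
`h > 0`, and `q_r(x,h) → 0` as `h → 0⁺`. -/
theorem stmt2 (K : ℝ → ℝ) (f : ℝ → ℝ) (r : ℕ)
    (hr : 1 ≤ r)
    (hKnonneg : ∀ t, 0 ≤ K t)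
    (hKmeas : Measurable K)
    (hKtail : Tendsto (fun t => |t| ^ (r + 1) * K t) (cocompact ℝ) (nhds 0))
    (hKmom : Integrable (fun t => |t| ^ r * K t))
    (hKprob : ∫ t, K t = 1) (hKint : Integrable K)
    (hKsymm : ∀ t, K (-t) = K t)
    (hKmean : ∫ t, t * K t = 0)
    (hKvar : Integrable (fun t => t ^ 2 * K t))
    (hfdiff : ContDiff ℝ r f)
    (hfint : Integrable (iteratedDeriv r f)) :
    ∀ᵐ x : ℝ,
      (∀ h : ℝ, 0 < h →
        Integrable (fun t : ℝ => t ^ r * K t *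
          ∫ w in (0:ℝ)..1,
            (iteratedDeriv r f (x - h * t * w) - iteratedDeriv r f x) * (1 - w) ^ (r - 1))) ∧
      Tendsto (fun h : ℝ =>
          ∫ t : ℝ, t ^ r * K t *
            ∫ w in (0:ℝ)..1,
              (iteratedDeriv r f (x - h * t * w) - iteratedDeriv r f x) * (1 - w) ^ (r - 1))
        (nhdsWithin 0 (Set.Ioi 0)) (nhds 0) := by
  refine ae_of_all _ fun x => ?_
  exact aux2 K (iteratedDeriv r f) r hKnonneg hKmeas hKmom
    (hfdiff.continuous_iteratedDeriv r (by exact_mod_cast le_rfl)) hfint x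
end

section
/- Define r(x,h) = ∫ t K(t)² ∫₀¹ (f'(x - h t w) - f'(x)) dw dt. Then for almost every x, |r(x,h)| < ∞ for all h > 0, r(x,h) → 0 as h → 0⁺, and moreover lim_{h→0⁺} ∫ r(x,h) dx = 0. -/
open MeasureTheory Real Filter Set

example (g : ℝ → ℝ) (s : ℝ) : ∫ x, g (x - s) = ∫ x, g x := integral_sub_right_eq_self g s
example (g : ℝ → ℝ) (s : ℝ) (h : Integrable g) : Integrable (fun x => g (x - s)) := h.comp_sub_right s

lemma ftc {f : ℝ → ℝ} (hfdiff : Differentiable ℝ f) (hfcont : Continuous (deriv f)) (a b : ℝ) :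
    f b - f a = ∫ u in a..b, deriv f u :=
  (intervalIntegral.integral_eq_sub_of_hasDerivAt
    (fun u _ => (hfdiff u).hasDerivAt) (hfcont.intervalIntegrable a b)).symm

lemma abs_ftc_le {f : ℝ → ℝ} (hfdiff : Differentiable ℝ f) (hfcont : Continuous (deriv f))
    (hfint : Integrable (deriv f)) (a b : ℝ) :
    |f b - f a| ≤ ∫ u, |deriv f u| := by
  rw [ftc hfdiff hfcont a b]
  calc |∫ u in a..b, deriv f u| ≤ ∫ u in Set.uIoc a b, |deriv f u| := by
        simpa using intervalIntegral.norm_integral_le_integral_norm_uIoc (f := deriv f) (a := a) (b := b)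
    _ ≤ ∫ u, |deriv f u| :=
        setIntegral_le_integral hfint.abs (Eventually.of_forall fun u => abs_nonneg _)

lemma inner_form {f : ℝ → ℝ} (hfdiff : Differentiable ℝ f) (hfcont : Continuous (deriv f))
    (x s : ℝ) (hs : s ≠ 0) :
    ∫ w in (0:ℝ)..1, deriv f (x - s * w) = (f x - f (x - s)) / s := by
  have key : ∀ w ∈ uIcc (0:ℝ) 1, HasDerivAt (fun w => -(f (x - s * w) / s)) (deriv f (x - s * w)) w := by
    intro w _
    have h1 : HasDerivAt (fun w : ℝ => x - s * w) (-s) w := by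
      simpa using ((hasDerivAt_id w).const_mul s).const_sub x
    have h2 : HasDerivAt (fun w => f (x - s * w)) (deriv f (x - s * w) * (-s)) w :=
      (hfdiff _).hasDerivAt.comp w h1
    have h3 := (h2.div_const s).neg
    refine h3.congr_deriv ?_
    rw [mul_neg, neg_div, neg_neg, mul_div_assoc, div_self hs, mul_one]
  have hc : Continuous fun w : ℝ => deriv f (x - s * w) := by
    exact hfcont.comp (by continuity)
  have hcont : IntervalIntegrable (fun w => deriv f (x - s * w)) volume 0 1 :=
    hc.intervalIntegrable 0 1
  rw [intervalIntegral.integral_eq_sub_of_hasDerivAt key hcont]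
  simp
  ring

lemma inner_diff {f : ℝ → ℝ} (hfdiff : Differentiable ℝ f) (hfcont : Continuous (deriv f))
    (x s : ℝ) (hs : s ≠ 0) :
    ∫ w in (0:ℝ)..1, (deriv f (x - s * w) - deriv f x) = (f x - f (x - s)) / s - deriv f x := by
  have hc : Continuous fun w : ℝ => deriv f (x - s * w) := by
    exact hfcont.comp (by continuity)
  rw [intervalIntegral.integral_sub (hc.intervalIntegrable 0 1)
      (intervalIntegrable_const), inner_form hfdiff hfcont x s hs]
  simp


lemma D_core {f : ℝ → ℝ} (hfdiff : Differentiable ℝ f) (hfcont : Continuous (deriv f))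
    (hfint : Integrable (deriv f)) (s : ℝ) (hs : 0 ≤ s) :
    Integrable (fun x => f x - f (x - s)) ∧
      (∫ x, (f x - f (x - s))) = s * ∫ u, deriv f u ∧
      (∫ x, |f x - f (x - s)|) ≤ s * ∫ u, |deriv f u| := by
  set φ := deriv f with hφ
  set ν := volume.restrict (Ioc (0:ℝ) s) with hν
  have hrepr : ∀ x : ℝ, f x - f (x - s) = ∫ u in Ioc (0:ℝ) s, φ (x - u) := by
    intro x
    rw [ftc hfdiff hfcont (x - s) x]
    have h2 : ∫ u in (0:ℝ)..s, φ (x - u) = ∫ u in (x - s)..(x - 0), φ u :=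
      intervalIntegral.integral_comp_sub_left (a := (0:ℝ)) (b := s) φ x
    rw [sub_zero] at h2
    rw [← h2, intervalIntegral.integral_of_le hs]
  have hFmeas : AEStronglyMeasurable (fun p : ℝ × ℝ => φ (p.1 - p.2)) (volume.prod ν) :=
    (hfcont.comp (continuous_fst.sub continuous_snd)).aestronglyMeasurable
  have hνfin : volume (Ioc (0:ℝ) s) < ⊤ := by
    rw [Real.volume_Ioc]; exact ENNReal.ofReal_lt_top
  have hFint : Integrable (fun p : ℝ × ℝ => φ (p.1 - p.2)) (volume.prod ν) := by
    refine (integrable_prod_iff' hFmeas).2 ⟨Eventually.of_forall fun u => hfint.comp_sub_right u, ?_⟩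
    have h1 : (fun u : ℝ => ∫ x, ‖φ (x - u)‖) = fun _ : ℝ => ∫ x, ‖φ x‖ :=
      funext fun u => integral_sub_right_eq_self (fun x => ‖φ x‖) u
    rw [h1, hν]
    exact integrableOn_const hνfin.ne
  have hDint : Integrable (fun x => f x - f (x - s)) := by
    refine (hFint.integral_prod_left).congr ?_
    exact Eventually.of_forall fun x => (hrepr x).symm
  have habs_int : Integrable (fun x => ∫ u in Ioc (0:ℝ) s, ‖φ (x - u)‖) :=
    hFint.norm.integral_prod_left
  have hswap := integral_integral_swap (f := fun x u => φ (x - u)) hFint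
  have hswapn := integral_integral_swap (f := fun x u => ‖φ (x - u)‖) hFint.norm
  have hmeasconst : (volume (Ioc (0:ℝ) s)).toReal = s := by
    rw [Real.volume_Ioc]; simp [hs]
  refine ⟨hDint, ?_, ?_⟩
  · calc (∫ x, (f x - f (x - s))) = ∫ x, ∫ u in Ioc (0:ℝ) s, φ (x - u) := by
          exact integral_congr_ae (Eventually.of_forall hrepr)
      _ = ∫ u in Ioc (0:ℝ) s, ∫ x, φ (x - u) := hswap
      _ = ∫ u in Ioc (0:ℝ) s, ∫ x, φ x :=
          integral_congr_ae (Eventually.of_forall fun u => integral_sub_right_eq_self φ u)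
      _ = s * ∫ u, φ u := by rw [setIntegral_const, measureReal_def, hmeasconst, smul_eq_mul]
  · calc (∫ x, |f x - f (x - s)|)
        ≤ ∫ x, ∫ u in Ioc (0:ℝ) s, ‖φ (x - u)‖ := by
          refine integral_mono hDint.abs habs_int fun x => ?_
          rw [hrepr x]
          simpa using norm_integral_le_integral_norm (μ := ν) (f := fun u => φ (x - u))
      _ = ∫ u in Ioc (0:ℝ) s, ∫ x, ‖φ (x - u)‖ := hswapn
      _ = ∫ u in Ioc (0:ℝ) s, ∫ x, ‖φ x‖ :=
          integral_congr_ae (Eventually.of_forall fun u =>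
            integral_sub_right_eq_self (fun x => ‖φ x‖) u)
      _ = s * ∫ u, |φ u| := by
          rw [setIntegral_const, measureReal_def, hmeasconst, smul_eq_mul]
          simp [Real.norm_eq_abs]

lemma D_all {f : ℝ → ℝ} (hfdiff : Differentiable ℝ f) (hfcont : Continuous (deriv f))
    (hfint : Integrable (deriv f)) (s : ℝ) :
    Integrable (fun x => f x - f (x - s)) ∧
      (∫ x, (f x - f (x - s))) = s * ∫ u, deriv f u ∧
      (∫ x, |f x - f (x - s)|) ≤ |s| * ∫ u, |deriv f u| := by
  rcases le_or_gt 0 s with hs | hs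
  · obtain ⟨h1, h2, h3⟩ := D_core hfdiff hfcont hfint s hs
    exact ⟨h1, h2, by rwa [abs_of_nonneg hs]⟩
  · obtain ⟨h1, h2, h3⟩ := D_core hfdiff hfcont hfint (-s) (by linarith)
    have key : ∀ x : ℝ, f x - f (x - s) = -((fun y => f y - f (y - -s)) (x - s)) := by
      intro x; simp only [sub_sub_cancel, neg_sub]; ring_nf
    have hcomp : Integrable (fun x => (fun y => f y - f (y - -s)) (x - s)) :=
      h1.comp_sub_right s
    refine ⟨?_, ?_, ?_⟩
    · exact hcomp.neg.congr (Eventually.of_forall fun x => (key x).symm)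
    · calc (∫ x, (f x - f (x - s)))
          = ∫ x, -((fun y => f y - f (y - -s)) (x - s)) := integral_congr_ae (Eventually.of_forall key)
        _ = -∫ x, (fun y => f y - f (y - -s)) (x - s) := integral_neg _
        _ = -∫ y, (f y - f (y - -s)) := by rw [integral_sub_right_eq_self (fun y => f y - f (y - -s)) s]
        _ = s * ∫ u, deriv f u := by rw [h2]; ring
    · calc (∫ x, |f x - f (x - s)|)
          = ∫ x, (fun y => |f y - f (y - -s)|) (x - s) := by
            refine integral_congr_ae (Eventually.of_forall fun x => ?_)
            show |f x - f (x - s)| = |f (x - s) - f (x - s - -s)|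
            rw [key x, abs_neg]
        _ = ∫ y, |f y - f (y - -s)| := integral_sub_right_eq_self (fun y => |f y - f (y - -s)|) s
        _ ≤ |s| * ∫ u, |deriv f u| := by rwa [abs_of_neg hs]
set_option maxHeartbeats 4000000 in
/-- with `r(x,h) = ∫ t K(t)² ∫₀¹ (f'(x-htw) - f'(x)) dw dt`, for almost every
`x` the defining integrand is integrable (so `|r(x,h)| < ∞`) for all `h > 0` and
`r(x,h) → 0` as `h → 0⁺`; moreover `∫ r(x,h) dx → 0` as `h → 0⁺`. -/
theorem stmt3 (K : ℝ → ℝ) (f : ℝ → ℝ) (M : ℝ)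
    (hKnonneg : ∀ t, 0 ≤ K t)
    (hKmeas : Measurable K)
    (hKbd : ∀ t, K t ≤ M)
    (hKtail : Tendsto (fun t => |t| ^ 2 * K t) (cocompact ℝ) (nhds 0))
    (hKmom : Integrable (fun t => |t| * K t))
    (hKprob : ∫ t, K t = 1) (hKint : Integrable K)
    (hKsymm : ∀ t, K (-t) = K t)
    (hKmean : ∫ t, t * K t = 0)
    (hKvar : Integrable (fun t => t ^ 2 * K t))
    (hfdiff : Differentiable ℝ f)
    (hfcont : Continuous (deriv f))
    (hfint : Integrable (deriv f)) :
    (∀ᵐ x : ℝ,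
      (∀ h : ℝ, 0 < h →
        Integrable (fun t : ℝ => t * (K t) ^ 2 *
          ∫ w in (0:ℝ)..1, (deriv f (x - h * t * w) - deriv f x))) ∧
      Tendsto (fun h : ℝ =>
          ∫ t : ℝ, t * (K t) ^ 2 * ∫ w in (0:ℝ)..1, (deriv f (x - h * t * w) - deriv f x))
        (nhdsWithin 0 (Set.Ioi 0)) (nhds 0)) ∧
    Tendsto (fun h : ℝ =>
        ∫ x : ℝ, ∫ t : ℝ, t * (K t) ^ 2 *
          ∫ w in (0:ℝ)..1, (deriv f (x - h * t * w) - deriv f x))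
      (nhdsWithin 0 (Set.Ioi 0)) (nhds 0) := by
  have hfc : Continuous f := hfdiff.continuous
  obtain ⟨L, hLdef⟩ : ∃ y : ℝ, y = ∫ u, |deriv f u| := ⟨_, rfl⟩
  have hL0 : 0 ≤ L := by rw [hLdef]; exact integral_nonneg fun u => abs_nonneg _
  have hM0 : 0 ≤ M := (hKnonneg 0).trans (hKbd 0)
  have hK2 : ∀ t, K t ^ 2 ≤ M * K t := fun t => by
    have h1 := mul_le_mul_of_nonneg_right (hKbd t) (hKnonneg t)
    nlinarith [hKnonneg t]
  have hDabs : ∀ x s : ℝ, |f x - f (x - s)| ≤ L := by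
    intro x s; rw [hLdef]; exact abs_ftc_le hfdiff hfcont hfint (x - s) x
  obtain ⟨I1, hI1def⟩ : ∃ y : ℝ, y = ∫ t, |t| * K t := ⟨_, rfl⟩
  have hI10 : 0 ≤ I1 := by
    rw [hI1def]; exact integral_nonneg fun t => mul_nonneg (abs_nonneg _) (hKnonneg t)
  have hae0 : ∀ᵐ t : ℝ, t ≠ (0:ℝ) := by
    rw [MeasureTheory.ae_iff]
    have he : {a : ℝ | ¬ a ≠ 0} = {0} := by ext a; simp
    rw [he]
    exact Real.volume_singleton
  -- closed form a.e.
  have hIJ : ∀ (x h : ℝ), 0 < h →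
      (fun t : ℝ => t * (K t) ^ 2 * ∫ w in (0:ℝ)..1, (deriv f (x - h * t * w) - deriv f x))
        =ᵐ[volume]
      (fun t : ℝ => K t ^ 2 * (f x - f (x - h * t)) / h - t * K t ^ 2 * deriv f x) := by
    intro x h hh
    filter_upwards [hae0] with t ht
    rw [inner_diff hfdiff hfcont x (h * t) (mul_ne_zero hh.ne' ht)]
    field_simp
  -- measurability of J
  have hJmeas : ∀ (x h : ℝ), AEStronglyMeasurable
      (fun t : ℝ => K t ^ 2 * (f x - f (x - h * t)) / h - t * K t ^ 2 * deriv f x) volume := by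
    intro x h
    have m1 : Measurable fun t : ℝ => K t ^ 2 := hKmeas.pow_const 2
    have m2 : Measurable fun t : ℝ => f x - f (x - h * t) :=
      (continuous_const.sub (hfc.comp (continuous_const.sub (continuous_const.mul continuous_id)))).measurable
    exact ((((m1.mul m2).div_const h).sub
      ((measurable_id.mul m1).mul_const (deriv f x))).aestronglyMeasurable)
  -- uniform bound on J
  have hJbd : ∀ (x h : ℝ), 0 < h → ∀ t : ℝ,
      |K t ^ 2 * (f x - f (x - h * t)) / h - t * K t ^ 2 * deriv f x|
        ≤ M * L / h * K t + (M * |deriv f x|) * (|t| * K t) := by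
    intro x h hh t
    have b1 : |K t ^ 2 * (f x - f (x - h * t)) / h| ≤ M * L / h * K t := by
      rw [abs_div, abs_mul, abs_of_nonneg (sq_nonneg (K t)), abs_of_pos hh]
      calc K t ^ 2 * |f x - f (x - h * t)| / h ≤ (M * K t) * L / h := by
            apply div_le_div_of_nonneg_right ?_ hh.le
            exact mul_le_mul (hK2 t) (hDabs x (h * t)) (abs_nonneg _)
              (mul_nonneg hM0 (hKnonneg t))
        _ = M * L / h * K t := by ring
    have b2 : |t * K t ^ 2 * deriv f x| ≤ (M * |deriv f x|) * (|t| * K t) := by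
      rw [abs_mul, abs_mul, abs_of_nonneg (sq_nonneg (K t))]
      calc |t| * K t ^ 2 * |deriv f x| ≤ |t| * (M * K t) * |deriv f x| :=
            mul_le_mul_of_nonneg_right
              (mul_le_mul_of_nonneg_left (hK2 t) (abs_nonneg t)) (abs_nonneg _)
        _ = (M * |deriv f x|) * (|t| * K t) := by ring
    calc |K t ^ 2 * (f x - f (x - h * t)) / h - t * K t ^ 2 * deriv f x|
        ≤ |K t ^ 2 * (f x - f (x - h * t)) / h| + |t * K t ^ 2 * deriv f x| := abs_sub _ _
      _ ≤ _ := add_le_add b1 b2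
  -- integrability of J
  have hJint : ∀ (x h : ℝ), 0 < h → Integrable
      (fun t : ℝ => K t ^ 2 * (f x - f (x - h * t)) / h - t * K t ^ 2 * deriv f x) := by
    intro x h hh
    refine Integrable.mono' ((hKint.const_mul (M * L / h)).add (hKmom.const_mul (M * |deriv f x|)))
      (hJmeas x h) (Eventually.of_forall fun t => ?_)
    simpa [Real.norm_eq_abs] using hJbd x h hh t
  -- Part 1
  have part1 : ∀ (x h : ℝ), 0 < h →
      Integrable (fun t : ℝ => t * (K t) ^ 2 *
        ∫ w in (0:ℝ)..1, (deriv f (x - h * t * w) - deriv f x)) := by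
    intro x h hh
    exact (hJint x h hh).congr (hIJ x h hh).symm
  -- Part 2
  have part2 : ∀ x : ℝ, Tendsto (fun h : ℝ =>
      ∫ t : ℝ, t * (K t) ^ 2 * ∫ w in (0:ℝ)..1, (deriv f (x - h * t * w) - deriv f x))
      (nhdsWithin 0 (Set.Ioi 0)) (nhds 0) := by
    intro x
    rw [Metric.tendsto_nhds]
    intro ε hε
    have hMI : 0 < M * I1 + 1 := by nlinarith [mul_nonneg hM0 hI10]
    obtain ⟨ε₁, hε₁def⟩ : ∃ y : ℝ, y = ε / (2 * (M * I1 + 1)) := ⟨_, rfl⟩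
    have hε₁ : 0 < ε₁ := by rw [hε₁def]; exact div_pos hε (by linarith)
    obtain ⟨Cx, hCxdef⟩ : ∃ y : ℝ, y = L + |deriv f x| := ⟨_, rfl⟩
    have hCx0 : 0 ≤ Cx := by rw [hCxdef]; exact add_nonneg hL0 (abs_nonneg _)
    have hCx1 : 0 < Cx + 1 := by linarith
    obtain ⟨ε₂, hε₂def⟩ : ∃ y : ℝ, y = ε / (2 * (Cx + 1)) := ⟨_, rfl⟩
    have hε₂ : 0 < ε₂ := by rw [hε₂def]; exact div_pos hε (by linarith)
    obtain ⟨δ, hδ0, hδ⟩ := Metric.continuousAt_iff.1 (hfcont.continuousAt (x := x)) ε₁ hε₁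
    have htail : ∀ᶠ t in cocompact ℝ, |t| ^ 2 * K t < ε₂ := hKtail.eventually (gt_mem_nhds hε₂)
    obtain ⟨C, hC, hCsub⟩ := mem_cocompact.1 htail
    obtain ⟨R, hR⟩ := hC.isBounded.subset_closedBall (0 : ℝ)
    set S : ℝ := max R 1 with hSdef
    have hS1 : (1:ℝ) ≤ S := le_max_right _ _
    have hS0 : (0:ℝ) < S := lt_of_lt_of_le one_pos hS1
    set h₀ : ℝ := min (δ ^ 2) ((S⁻¹) ^ 2) with hh₀def
    have hh₀ : 0 < h₀ := lt_min (pow_pos hδ0 2) (pow_pos (inv_pos.2 hS0) 2)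
    filter_upwards [Ioo_mem_nhdsGT_of_mem
      (show (0:ℝ) ∈ Set.Ico 0 h₀ from ⟨le_refl _, hh₀⟩)] with h hmem
    obtain ⟨hh1, hh2⟩ := hmem
    have hhδ : h < δ ^ 2 := lt_of_lt_of_le hh2 (min_le_left _ _)
    have hhS : h < (S⁻¹) ^ 2 := lt_of_lt_of_le hh2 (min_le_right _ _)
    have key : ∀ t : ℝ, |K t ^ 2 * (f x - f (x - h * t)) / h - t * K t ^ 2 * deriv f x|
        ≤ M * ε₁ * (|t| * K t) + ε₂ * Cx * K t := by
      intro t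
      by_cases hcase : h * t ^ 2 ≤ 1
      · -- small t regime
        have habs : |h * t| < δ := by
          have h1 : |h * t| ^ 2 = h * (h * t ^ 2) := by
            rw [abs_mul, mul_pow, abs_of_pos hh1, sq_abs]; ring
          have h2 : |h * t| ^ 2 < δ ^ 2 := by
            rw [h1]
            calc h * (h * t ^ 2) ≤ h * 1 := by nlinarith
              _ < δ ^ 2 := by linarith
          exact lt_of_pow_lt_pow_left₀ 2 hδ0.le h2
        have hnum : |f x - f (x - h * t) - h * t * deriv f x| ≤ ε₁ * |h * t| := by
          have hrepr : f x - f (x - h * t) - h * t * deriv f x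
              = ∫ u in (x - h * t)..x, (deriv f u - deriv f x) := by
            rw [intervalIntegral.integral_sub (hfcont.intervalIntegrable _ _)
              intervalIntegrable_const, ← ftc hfdiff hfcont (x - h * t) x,
              intervalIntegral.integral_const]
            simp only [smul_eq_mul, sub_sub_cancel]
          rw [hrepr]
          have hbound : ∀ u ∈ Set.uIoc (x - h * t) x, ‖deriv f u - deriv f x‖ ≤ ε₁ := by
            intro u hu
            have h1 : |u - x| ≤ |h * t| := by
              rcases Set.mem_uIoc.1 hu with ⟨ha, hb'⟩ | ⟨ha, hb'⟩ <;> rw [abs_le] <;>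
                constructor <;> nlinarith [le_abs_self (h * t), neg_abs_le (h * t)]
            have h2 : dist u x < δ := by
              rw [Real.dist_eq]; exact lt_of_le_of_lt h1 habs
            have h3 := hδ h2
            rw [Real.dist_eq] at h3
            exact le_of_lt (by simpa [Real.norm_eq_abs] using h3)
          have hb := intervalIntegral.norm_integral_le_of_norm_le_const hbound
          calc |∫ u in (x - h * t)..x, (deriv f u - deriv f x)|
              ≤ ε₁ * |x - (x - h * t)| := by simpa [Real.norm_eq_abs] using hb
            _ = ε₁ * |h * t| := by rw [sub_sub_cancel]
        have heq : K t ^ 2 * (f x - f (x - h * t)) / h - t * K t ^ 2 * deriv f x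
            = K t ^ 2 * (f x - f (x - h * t) - h * t * deriv f x) / h := by
          field_simp
        rw [heq]
        have hb2 : |K t ^ 2 * (f x - f (x - h * t) - h * t * deriv f x) / h|
            ≤ K t ^ 2 * (ε₁ * |h * t|) / h := by
          rw [abs_div, abs_mul, abs_of_nonneg (sq_nonneg (K t)), abs_of_pos hh1]
          exact div_le_div_of_nonneg_right
            (mul_le_mul_of_nonneg_left hnum (sq_nonneg _)) hh1.le
        have hb3 : K t ^ 2 * (ε₁ * |h * t|) / h ≤ M * ε₁ * (|t| * K t) := by
          rw [abs_mul, abs_of_pos hh1]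
          have he : K t ^ 2 * (ε₁ * (h * |t|)) / h = ε₁ * |t| * K t ^ 2 := by
            field_simp
          rw [he]
          calc ε₁ * |t| * K t ^ 2 ≤ ε₁ * |t| * (M * K t) :=
                mul_le_mul_of_nonneg_left (hK2 t)
                  (mul_nonneg hε₁.le (abs_nonneg _))
            _ = M * ε₁ * (|t| * K t) := by ring
        have hb4 : 0 ≤ ε₂ * Cx * K t := mul_nonneg (mul_nonneg hε₂.le hCx0) (hKnonneg t)
        exact le_trans (hb2.trans hb3) (le_add_of_nonneg_right hb4)
      · -- large t regime
        have ht2 : 1 < h * t ^ 2 := not_le.1 hcase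
        have ht0 : t ≠ 0 := by rintro rfl; simp at ht2; linarith
        have htpos : (0:ℝ) < t ^ 2 := by positivity
        have htS : S < |t| := by
          have h1 : S ^ 2 < t ^ 2 := by
            have hx : h * S ^ 2 < 1 := by
              have : h * S ^ 2 < (S⁻¹) ^ 2 * S ^ 2 :=
                mul_lt_mul_of_pos_right hhS (pow_pos hS0 2)
              have he : (S⁻¹) ^ 2 * S ^ 2 = 1 := by field_simp
              linarith [he ▸ this]
            nlinarith
          have : S ^ 2 < |t| ^ 2 := by rwa [sq_abs]
          exact lt_of_pow_lt_pow_left₀ 2 (abs_nonneg t) this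
        have h1t : (1:ℝ) ≤ |t| := le_trans hS1 htS.le
        have hKt : K t * t ^ 2 ≤ ε₂ := by
          have hnotC : t ∉ C := by
            intro hmemC
            have := hR hmemC
            rw [Metric.mem_closedBall, Real.dist_eq, sub_zero] at this
            have hRS : R ≤ S := le_max_left _ _
            linarith
          have := hCsub hnotC
          simp only [Set.mem_setOf_eq] at this
          rw [sq_abs] at this
          nlinarith
        have e1 : |K t ^ 2 * (f x - f (x - h * t)) / h - t * K t ^ 2 * deriv f x|
            ≤ K t ^ 2 * L / h + |t| * K t ^ 2 * |deriv f x| := by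
          refine (abs_sub _ _).trans (add_le_add ?_ ?_)
          · rw [abs_div, abs_mul, abs_of_nonneg (sq_nonneg _), abs_of_pos hh1]
            exact div_le_div_of_nonneg_right
              (mul_le_mul_of_nonneg_left (hDabs x (h * t)) (sq_nonneg _)) hh1.le
          · rw [abs_mul, abs_mul, abs_of_nonneg (sq_nonneg (K t))]
        have e2 : K t ^ 2 * L / h ≤ ε₂ * L * K t := by
          rw [div_le_iff₀ hh1]
          have c1 : K t ^ 2 * L * t ^ 2 ≤ ε₂ * K t * L := by
            nlinarith [mul_le_mul_of_nonneg_right hKt (mul_nonneg (hKnonneg t) hL0)]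
          have c2 : ε₂ * K t * L ≤ ε₂ * K t * L * (h * t ^ 2) :=
            le_mul_of_one_le_right
              (mul_nonneg (mul_nonneg hε₂.le (hKnonneg t)) hL0) ht2.le
          have c3 : K t ^ 2 * L * t ^ 2 ≤ ε₂ * L * K t * h * t ^ 2 := by nlinarith
          exact le_of_mul_le_mul_right (by nlinarith) htpos
        have e3 : |t| * K t ^ 2 * |deriv f x| ≤ ε₂ * |deriv f x| * K t := by
          have c4 : |t| ≤ t ^ 2 := by nlinarith [sq_abs t]
          have c5 : |t| * K t ^ 2 * |deriv f x| * t ^ 2 ≤ ε₂ * |deriv f x| * K t * t ^ 2 := by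
            nlinarith [mul_le_mul_of_nonneg_right hKt
              (mul_nonneg (mul_nonneg (abs_nonneg t) (hKnonneg t)) (abs_nonneg (deriv f x))),
              mul_nonneg (mul_nonneg hε₂.le (hKnonneg t)) (abs_nonneg (deriv f x))]
          exact le_of_mul_le_mul_right (by nlinarith) htpos
        have e4 : 0 ≤ M * ε₁ * (|t| * K t) :=
          mul_nonneg (mul_nonneg hM0 hε₁.le) (mul_nonneg (abs_nonneg t) (hKnonneg t))
        have e5 : ε₂ * L * K t + ε₂ * |deriv f x| * K t = ε₂ * Cx * K t := by
          rw [hCxdef]; ring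
        refine le_trans (e1.trans (add_le_add e2 e3)) ?_
        rw [e5]
        exact le_add_of_nonneg_left e4
    have hbint : Integrable (fun t : ℝ => M * ε₁ * (|t| * K t) + ε₂ * Cx * K t) :=
      (hKmom.const_mul _).add (hKint.const_mul _)
    have habs : |∫ t : ℝ, (K t ^ 2 * (f x - f (x - h * t)) / h - t * K t ^ 2 * deriv f x)|
        ≤ M * ε₁ * I1 + ε₂ * Cx := by
      calc |∫ t : ℝ, (K t ^ 2 * (f x - f (x - h * t)) / h - t * K t ^ 2 * deriv f x)|
          ≤ ∫ t : ℝ, |K t ^ 2 * (f x - f (x - h * t)) / h - t * K t ^ 2 * deriv f x| := by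
            simpa [Real.norm_eq_abs] using norm_integral_le_integral_norm
              (f := fun t : ℝ => K t ^ 2 * (f x - f (x - h * t)) / h - t * K t ^ 2 * deriv f x)
              (μ := volume)
        _ ≤ ∫ t : ℝ, (M * ε₁ * (|t| * K t) + ε₂ * Cx * K t) :=
            integral_mono (hJint x h hh1).abs hbint key
        _ = M * ε₁ * (∫ t : ℝ, |t| * K t) + ε₂ * Cx * (∫ t : ℝ, K t) := by
            rw [integral_add (hKmom.const_mul _) (hKint.const_mul _),
              integral_const_mul, integral_const_mul]
        _ = M * ε₁ * I1 + ε₂ * Cx := by rw [hKprob, ← hI1def, mul_one]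
    rw [Real.dist_eq, sub_zero, integral_congr_ae (hIJ x h hh1)]
    have f1 : M * ε₁ * I1 < ε / 2 := by
      have g2 : M * ε₁ * I1 < (M * I1 + 1) * ε₁ := by nlinarith
      have g3 : (M * I1 + 1) * ε₁ = ε / 2 := by
        have hne : (2 * (M * I1 + 1)) ≠ 0 := ne_of_gt (by linarith)
        rw [hε₁def, mul_comm, div_mul_eq_mul_div, div_eq_div_iff hne two_ne_zero]
        ring
      linarith
    have f2 : ε₂ * Cx < ε / 2 := by
      have g2 : ε₂ * Cx < ε₂ * (Cx + 1) := by nlinarith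
      have g3 : ε₂ * (Cx + 1) = ε / 2 := by
        have hne : (2 * (Cx + 1)) ≠ 0 := ne_of_gt (by linarith)
        rw [hε₂def, div_mul_eq_mul_div, div_eq_div_iff hne two_ne_zero]
        ring
      linarith
    calc |∫ t : ℝ, (K t ^ 2 * (f x - f (x - h * t)) / h - t * K t ^ 2 * deriv f x)|
        ≤ M * ε₁ * I1 + ε₂ * Cx := habs
      _ < ε := by linarith
  -- Part 3
  obtain ⟨c, hcdef⟩ : ∃ y : ℝ, y = ∫ t : ℝ, t * K t ^ 2 := ⟨_, rfl⟩
  have hB_int : Integrable (fun t : ℝ => t * K t ^ 2) := by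
    refine Integrable.mono' (hKmom.const_mul M)
      ((measurable_id.mul (hKmeas.pow_const 2)).aestronglyMeasurable)
      (Eventually.of_forall fun t => ?_)
    rw [Real.norm_eq_abs, abs_mul, abs_of_nonneg (sq_nonneg (K t))]
    calc |t| * K t ^ 2 ≤ |t| * (M * K t) :=
          mul_le_mul_of_nonneg_left (hK2 t) (abs_nonneg t)
      _ = M * (|t| * K t) := by ring
  have hb1 : ∀ (x h : ℝ), 0 < h → ∀ t : ℝ,
      ‖K t ^ 2 * (f x - f (x - h * t)) / h‖ ≤ M * L / h * K t := by
    intro x h hh t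
    rw [Real.norm_eq_abs, abs_div, abs_mul, abs_of_nonneg (sq_nonneg (K t)), abs_of_pos hh]
    calc K t ^ 2 * |f x - f (x - h * t)| / h ≤ (M * K t) * L / h := by
          apply div_le_div_of_nonneg_right ?_ hh.le
          exact mul_le_mul (hK2 t) (hDabs x (h * t)) (abs_nonneg _)
            (mul_nonneg hM0 (hKnonneg t))
      _ = M * L / h * K t := by ring
  have part3eq : ∀ h : ℝ, 0 < h →
      (∫ x : ℝ, ∫ t : ℝ, t * (K t) ^ 2 *
        ∫ w in (0:ℝ)..1, (deriv f (x - h * t * w) - deriv f x)) = 0 := by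
    intro h hh
    have hA_int : ∀ x : ℝ, Integrable (fun t : ℝ => K t ^ 2 * (f x - f (x - h * t)) / h) := by
      intro x
      refine Integrable.mono' (hKint.const_mul (M * L / h)) ?_
        (Eventually.of_forall fun t => hb1 x h hh t)
      have m2 : Measurable fun t : ℝ => f x - f (x - h * t) :=
        (continuous_const.sub (hfc.comp
          (continuous_const.sub (continuous_const.mul continuous_id)))).measurable
      exact (((hKmeas.pow_const 2).mul m2).div_const h).aestronglyMeasurable
    have hJeq : ∀ x : ℝ,
        (∫ t : ℝ, t * (K t) ^ 2 * ∫ w in (0:ℝ)..1, (deriv f (x - h * t * w) - deriv f x))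
          = (∫ t : ℝ, K t ^ 2 * (f x - f (x - h * t)) / h) - c * deriv f x := by
      intro x
      rw [integral_congr_ae (hIJ x h hh),
        integral_sub (hA_int x) (hB_int.mul_const _), integral_mul_const, ← hcdef]
    have hGmeas : AEStronglyMeasurable
        (fun p : ℝ × ℝ => K p.2 ^ 2 * (f p.1 - f (p.1 - h * p.2)) / h)
        (volume.prod volume) := by
      apply Measurable.aestronglyMeasurable
      have m1 : Measurable fun p : ℝ × ℝ => K p.2 ^ 2 := (hKmeas.comp measurable_snd).pow_const 2
      have m2 : Measurable fun p : ℝ × ℝ => f p.1 - f (p.1 - h * p.2) :=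
        ((hfc.measurable.comp measurable_fst).sub
          (hfc.measurable.comp (measurable_fst.sub (measurable_snd.const_mul h))))
      exact (m1.mul m2).div_const h
    have hDa := fun s : ℝ => D_all hfdiff hfcont hfint s
    have hGint : Integrable (fun p : ℝ × ℝ => K p.2 ^ 2 * (f p.1 - f (p.1 - h * p.2)) / h)
        (volume.prod volume) := by
      refine (integrable_prod_iff' hGmeas).2
        ⟨Eventually.of_forall fun t => ((hDa (h * t)).1.const_mul (K t ^ 2)).div_const h, ?_⟩
      have hns : ∀ t : ℝ, (∫ x : ℝ, ‖K t ^ 2 * (f x - f (x - h * t)) / h‖)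
          = K t ^ 2 / h * ∫ x : ℝ, |f x - f (x - h * t)| := by
        intro t
        have he : ∀ x : ℝ, ‖K t ^ 2 * (f x - f (x - h * t)) / h‖
            = K t ^ 2 / h * |f x - f (x - h * t)| := by
          intro x
          rw [Real.norm_eq_abs, abs_div, abs_mul, abs_of_nonneg (sq_nonneg _), abs_of_pos hh]
          ring
        simp_rw [he]
        rw [integral_const_mul]
      refine Integrable.mono' (hKmom.const_mul (M * L)) ?_ (Eventually.of_forall fun t => ?_)
      · exact (hGmeas.norm.prod_swap.integral_prod_right')
      · rw [Real.norm_eq_abs, abs_of_nonneg (integral_nonneg fun x => norm_nonneg _), hns t]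
        calc K t ^ 2 / h * ∫ x : ℝ, |f x - f (x - h * t)|
            ≤ K t ^ 2 / h * (|h * t| * L) :=
              mul_le_mul_of_nonneg_left (hLdef ▸ (hDa (h * t)).2.2)
                (div_nonneg (sq_nonneg _) hh.le)
          _ = K t ^ 2 * (|t| * L) := by
              rw [abs_mul, abs_of_pos hh]
              field_simp [hh.ne']
          _ ≤ M * K t * (|t| * L) :=
              mul_le_mul_of_nonneg_right (hK2 t) (mul_nonneg (abs_nonneg t) hL0)
          _ = M * L * (|t| * K t) := by ring
    have hswap := integral_integral_swap
      (f := fun x t : ℝ => K t ^ 2 * (f x - f (x - h * t)) / h) hGint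
    have hinner : ∀ t : ℝ, (∫ x : ℝ, K t ^ 2 * (f x - f (x - h * t)) / h)
        = t * K t ^ 2 * ∫ u : ℝ, deriv f u := by
      intro t
      have he : ∀ x : ℝ, K t ^ 2 * (f x - f (x - h * t)) / h
          = K t ^ 2 / h * (f x - f (x - h * t)) := fun x => by ring
      simp_rw [he]
      rw [integral_const_mul, (hDa (h * t)).2.1]
      field_simp
    calc (∫ x : ℝ, ∫ t : ℝ, t * (K t) ^ 2 *
            ∫ w in (0:ℝ)..1, (deriv f (x - h * t * w) - deriv f x))
        = ∫ x : ℝ, ((∫ t : ℝ, K t ^ 2 * (f x - f (x - h * t)) / h) - c * deriv f x) :=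
          integral_congr_ae (Eventually.of_forall hJeq)
      _ = (∫ x : ℝ, ∫ t : ℝ, K t ^ 2 * (f x - f (x - h * t)) / h)
            - ∫ x : ℝ, c * deriv f x :=
          integral_sub hGint.integral_prod_left (hfint.const_mul c)
      _ = (∫ t : ℝ, ∫ x : ℝ, K t ^ 2 * (f x - f (x - h * t)) / h)
            - c * ∫ x : ℝ, deriv f x := by rw [hswap, integral_const_mul]
      _ = (∫ t : ℝ, t * K t ^ 2 * ∫ u : ℝ, deriv f u) - c * ∫ u : ℝ, deriv f u := by
          rw [integral_congr_ae (Eventually.of_forall hinner)]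
      _ = 0 := by rw [integral_mul_const, ← hcdef, sub_self]
  have part3 : Tendsto (fun h : ℝ =>
      ∫ x : ℝ, ∫ t : ℝ, t * (K t) ^ 2 *
        ∫ w in (0:ℝ)..1, (deriv f (x - h * t * w) - deriv f x))
      (nhdsWithin 0 (Set.Ioi 0)) (nhds 0) := by
    have hev : (fun _ : ℝ => (0:ℝ)) =ᶠ[nhdsWithin 0 (Set.Ioi 0)] (fun h : ℝ =>
        ∫ x : ℝ, ∫ t : ℝ, t * (K t) ^ 2 *
          ∫ w in (0:ℝ)..1, (deriv f (x - h * t * w) - deriv f x)) := by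
      filter_upwards [eventually_mem_nhdsWithin] with h hh
      exact (part3eq h hh).symm
    exact Tendsto.congr' hev tendsto_const_nhds
  exact ⟨ae_of_all _ fun x => ⟨fun h hh => part1 x h hh, part2 x⟩, part3⟩
end

section
/- Using Taylor's theorem with integral remainder, for Y with density f (differentiable, f' continuous and integrable) and bounded kernel K with ∫ |t| K(t) dt < ∞: E[K_h(x - Y)²] = h^{-1} R(K) f(x) - (∫ t K(t)² dt) f'(x) - r(x,h), where r(x,h) = ∫ t K(t)² ∫₀¹ (f'(x - h t w) - f'(x)) dw dt and R(K) = ∫ K². Consequently E[K_h(x - Y)²] = h^{-1} R(K) f(x) + O(1) as h → 0⁺ for almost every x. -/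
open MeasureTheory Real Filter Asymptotics

lemma stmt11_comp_sub_div (φ : ℝ → ℝ) (x h : ℝ) (hh : 0 < h) :
    ∫ y, φ ((x - y)/h) = h * ∫ t, φ t := by
  have e1 : ∫ (a : ℝ), φ ((x - a)/h) = ∫ u, φ (u / h) :=
    integral_sub_left_eq_self (fun u => φ (u/h)) volume x
  rw [e1, Measure.integral_comp_div φ h, abs_of_pos hh, smul_eq_mul]

/-- change of variables `y = x - h t` -/
lemma stmt11_cov (K f : ℝ → ℝ) (x h : ℝ) (hh : 0 < h) :
    (∫ y, ((1 / h) * K ((x - y) / h)) ^ 2 * f y)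
      = h⁻¹ * ∫ t, (K t) ^ 2 * f (x - h * t) := by
  have hne : h ≠ 0 := ne_of_gt hh
  have h1 : (fun y => ((1/h) * K ((x-y)/h))^2 * f y)
      = fun y => (1/h)^2 * ((fun t => (K t)^2 * f (x - h*t)) ((x - y)/h)) := by
    funext y
    have hxy : x - h * ((x - y)/h) = y := by field_simp; ring
    simp only [hxy]; ring
  rw [show (∫ y, ((1 / h) * K ((x - y) / h)) ^ 2 * f y)
      = ∫ y, (1/h)^2 * ((fun t => (K t)^2 * f (x - h*t)) ((x - y)/h)) from by rw [← h1]]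
  rw [integral_const_mul]
  have e2 := stmt11_comp_sub_div (fun t => (K t)^2 * f (x - h*t)) x h hh
  rw [e2]
  field_simp

/-- Taylor/FTC: `f (x - c) = f x - c ∫₀¹ f' (x - c w) dw` -/
lemma stmt11_ftc (f : ℝ → ℝ) (hfdiff : Differentiable ℝ f) (hf'cont : Continuous (deriv f))
    (x c : ℝ) :
    f (x - c) = f x - c * ∫ w in (0:ℝ)..1, deriv f (x - c * w) := by
  have hinner : ∀ w : ℝ, HasDerivAt (fun w => x - c * w) (-c) w := by
    intro w
    simpa using ((hasDerivAt_id w).const_mul c).const_sub x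
  have hd : ∀ w ∈ Set.uIcc (0:ℝ) 1,
      HasDerivAt (fun w => f (x - c * w)) (deriv f (x - c * w) * (-c)) w := by
    intro w _
    exact ((hfdiff (x - c * w)).hasDerivAt).comp w (hinner w)
  have hci : IntervalIntegrable (fun w => deriv f (x - c * w) * (-c)) volume 0 1 :=
    ((hf'cont.comp (continuous_const.sub (continuous_const.mul continuous_id))).mul
      continuous_const).intervalIntegrable 0 1
  have key := intervalIntegral.integral_eq_sub_of_hasDerivAt hd hci
  rw [intervalIntegral.integral_mul_const] at key
  simp only [mul_one, mul_zero, sub_zero] at key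
  linarith [key]

/-- tail bound from the cocompact hypothesis -/
lemma stmt11_tail (K : ℝ → ℝ)
    (hKtail : Tendsto (fun t => |t| ^ 2 * K t) (cocompact ℝ) (nhds 0)) :
    ∃ T : ℝ, 1 ≤ T ∧ ∀ t : ℝ, T ≤ |t| → K t ≤ 1 / t ^ 2 := by
  have hev : ∀ᶠ t in cocompact ℝ, |t| ^ 2 * K t ≤ 1 :=
    hKtail.eventually (eventually_le_nhds one_pos)
  rw [cocompact_eq_atBot_atTop, eventually_sup] at hev
  obtain ⟨h2, h1⟩ := hev
  obtain ⟨T₂, hT₂⟩ := eventually_atBot.mp h2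
  obtain ⟨T₁, hT₁⟩ := eventually_atTop.mp h1
  refine ⟨max 1 (max T₁ (-T₂)), le_max_left _ _, fun t ht => ?_⟩
  have h1t : (1:ℝ) ≤ |t| := le_trans (le_max_left _ _) ht
  have habs : |t| ^ 2 * K t ≤ 1 := by
    rcases le_or_gt 0 t with h | h
    · refine hT₁ t ?_
      rw [abs_of_nonneg h] at ht
      exact le_trans (le_trans (le_max_left _ _) (le_max_right _ _)) ht
    · refine hT₂ t ?_
      rw [abs_of_neg h] at ht
      have : -T₂ ≤ -t := le_trans (le_trans (le_max_right _ _) (le_max_right _ _)) ht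
      linarith
  rw [sq_abs] at habs
  have ht2 : (0:ℝ) < t ^ 2 := by nlinarith [sq_abs t, sq_nonneg (|t| - 1)]
  rw [le_div_iff₀ ht2]
  linarith [habs]

theorem stmt11 (K : ℝ → ℝ) (f : ℝ → ℝ) (M : ℝ)
    (hKmeas : Measurable K) (hKnonneg : ∀ t, 0 ≤ K t)
    (hKbd : ∀ t, K t ≤ M)
    (hKtail : Tendsto (fun t => |t| ^ 2 * K t) (cocompact ℝ) (nhds 0))
    (hKabs : Integrable (fun t => |t| * K t))
    (hKint : Integrable K)
    (hfmeas : Measurable f) (hfnonneg : ∀ y, 0 ≤ f y) (hfprob : ∫ y, f y = 1)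
    (hfdiff : Differentiable ℝ f)
    (hf'cont : Continuous (deriv f))
    (hf'int : Integrable (deriv f)) :
    ∀ᵐ x : ℝ,
      (∀ h : ℝ, 0 < h →
        (∫ y, ((1 / h) * K ((x - y) / h)) ^ 2 * f y) =
          h⁻¹ * (∫ u, (K u) ^ 2) * f x - (∫ t, t * (K t) ^ 2) * deriv f x -
            ∫ t, t * (K t) ^ 2 * ∫ w in (0:ℝ)..1, (deriv f (x - h * t * w) - deriv f x)) ∧
      (fun h : ℝ =>
          (∫ y, ((1 / h) * K ((x - y) / h)) ^ 2 * f y) - h⁻¹ * (∫ u, (K u) ^ 2) * f x)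
        =O[nhdsWithin 0 (Set.Ioi 0)] (fun _ => (1 : ℝ)) := by
  -- basic constants and integrability facts
  have hM0 : 0 ≤ M := le_trans (hKnonneg 0) (hKbd 0)
  have hK2int : Integrable (fun t => (K t) ^ 2) := by
    refine (hKint.const_mul M).mono ((hKmeas.pow_const 2).aestronglyMeasurable)
      (ae_of_all _ fun t => ?_)
    rw [Real.norm_eq_abs, Real.norm_eq_abs, abs_of_nonneg (by positivity),
      abs_of_nonneg (mul_nonneg hM0 (hKnonneg t))]
    nlinarith [hKnonneg t, hKbd t]
  have htK2int : Integrable (fun t => t * (K t) ^ 2) := by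
    refine (hKabs.const_mul M).mono
      ((measurable_id.mul (hKmeas.pow_const 2)).aestronglyMeasurable)
      (ae_of_all _ fun t => ?_)
    rw [Real.norm_eq_abs, Real.norm_eq_abs, abs_mul, abs_mul,
      abs_of_nonneg (by positivity : (0:ℝ) ≤ (K t)^2),
      abs_of_nonneg hM0, abs_mul, abs_abs, abs_of_nonneg (hKnonneg t)]
    nlinarith [mul_nonneg (mul_nonneg (abs_nonneg t) (hKnonneg t))
      (sub_nonneg.mpr (hKbd t))]
  -- f is bounded
  obtain ⟨B, hB0, hB⟩ : ∃ B : ℝ, 0 ≤ B ∧ ∀ y, |f y| ≤ B := by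
    refine ⟨|f 0| + ∫ t, |deriv f t|, by positivity, fun y => ?_⟩
    have hFTC : ∫ t in (0:ℝ)..y, deriv f t = f y - f 0 :=
      intervalIntegral.integral_deriv_eq_sub (fun t _ => hfdiff t)
        (hf'cont.intervalIntegrable _ _)
    have h1 : ‖∫ t in (0:ℝ)..y, deriv f t‖ ≤ ∫ t in Set.uIoc 0 y, ‖deriv f t‖ :=
      intervalIntegral.norm_integral_le_integral_norm_uIoc
    have h2 : ∫ t in Set.uIoc 0 y, ‖deriv f t‖ ≤ ∫ t, ‖deriv f t‖ :=
      setIntegral_le_integral hf'int.norm (ae_of_all _ fun t => norm_nonneg _)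
    rw [hFTC, Real.norm_eq_abs] at h1
    simp only [Real.norm_eq_abs] at h1 h2
    have := abs_sub_abs_le_abs_sub (f y) (f 0)
    have habs : |f y| ≤ |f 0| + |f y - f 0| := by
      calc |f y| = |f 0 + (f y - f 0)| := by ring_nf
      _ ≤ |f 0| + |f y - f 0| := abs_add_le _ _
    linarith
  obtain ⟨T, hT1, hT⟩ := stmt11_tail K hKtail
  refine ae_of_all _ fun x => ?_
  -- local sup bound of |f'| near x
  obtain ⟨L0, hL0⟩ := (isCompact_Icc : IsCompact (Set.Icc (x-1) (x+1))).exists_bound_of_continuousOn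
    hf'cont.continuousOn
  set L : ℝ := max L0 0 with hLdef
  have hL : ∀ y ∈ Set.Icc (x-1) (x+1), |deriv f y| ≤ L := fun y hy =>
    le_trans (by simpa using hL0 y hy) (le_max_left _ _)
  have hLnn : 0 ≤ L := le_max_right _ _
  -- FTC relation, for every h t
  have hg : ∀ h t : ℝ, f x - f (x - h * t)
      = (h * t) * ∫ w in (0:ℝ)..1, deriv f (x - h * t * w) := by
    intro h t
    have := stmt11_ftc f hfdiff hf'cont x (h * t)
    linarith
  -- integrability of the "G" integrand for h > 0
  have hGint : ∀ h : ℝ, Integrable (fun t => (K t)^2 * (f x - f (x - h * t))) := by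
    intro h
    have hφ : Integrable (fun t => (K t)^2 * f (x - h * t)) := by
      refine (hK2int.const_mul B).mono
        (((hKmeas.pow_const 2).mul
          (hfmeas.comp (measurable_const.sub (measurable_const.mul measurable_id)))).aestronglyMeasurable)
        (ae_of_all _ fun t => ?_)
      rw [Real.norm_eq_abs, Real.norm_eq_abs, abs_mul, abs_mul,
        abs_of_nonneg (by positivity : (0:ℝ) ≤ (K t)^2),
        abs_of_nonneg hB0]
      have := hB (x - h * t)
      nlinarith [sq_nonneg (K t), abs_nonneg (f (x - h*t))]
    have := (hK2int.mul_const (f x)).sub hφ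
    simpa [mul_sub, Pi.sub_def] using this
  -- the key identity in G-form
  have key : ∀ h : ℝ, 0 < h →
      (∫ y, ((1 / h) * K ((x - y) / h)) ^ 2 * f y)
        = h⁻¹ * (∫ u, (K u)^2) * f x
          - h⁻¹ * ∫ t, (K t)^2 * (f x - f (x - h * t)) := by
    intro h hh
    rw [stmt11_cov K f x h hh]
    have e1 : (fun t => (K t)^2 * f (x - h * t))
        = fun t => (K t)^2 * f x - (K t)^2 * (f x - f (x - h * t)) := by
      funext t; ring
    rw [e1, integral_sub (hK2int.mul_const (f x)) (hGint h), integral_mul_const]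
    ring
  -- relation between the G-integral and the r-integral, for h > 0
  have hr : ∀ h : ℝ, 0 < h →
      (∫ t, t * (K t) ^ 2 * ∫ w in (0:ℝ)..1, (deriv f (x - h * t * w) - deriv f x))
        = h⁻¹ * (∫ t, (K t)^2 * (f x - f (x - h * t)))
          - (∫ t, t * (K t) ^ 2) * deriv f x := by
    intro h hh
    have hne : h ≠ 0 := ne_of_gt hh
    have hci : ∀ t : ℝ, IntervalIntegrable (fun w => deriv f (x - h * t * w)) volume 0 1 :=
      fun t => (hf'cont.comp
        (continuous_const.sub (continuous_const.mul continuous_id))).intervalIntegrable 0 1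
    have e1 : ∀ t : ℝ, t * (K t) ^ 2 * ∫ w in (0:ℝ)..1, (deriv f (x - h * t * w) - deriv f x)
        = h⁻¹ * ((K t)^2 * (f x - f (x - h * t))) - (t * (K t) ^ 2) * deriv f x := by
      intro t
      rw [intervalIntegral.integral_sub (hci t) intervalIntegrable_const,
        intervalIntegral.integral_const]
      simp only [smul_eq_mul, sub_zero, one_mul]
      rw [hg h t]
      set I := ∫ w in (0:ℝ)..1, deriv f (x - h * t * w) with hIdef
      field_simp
    rw [show (fun t => t * (K t) ^ 2 * ∫ w in (0:ℝ)..1, (deriv f (x - h * t * w) - deriv f x))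
        = fun t => h⁻¹ * ((K t)^2 * (f x - f (x - h * t))) - (t * (K t) ^ 2) * deriv f x
      from funext e1]
    rw [integral_sub ((hGint h).const_mul h⁻¹) (htK2int.mul_const (deriv f x)),
      integral_const_mul, integral_mul_const]
  constructor
  · -- exact identity
    intro h hh
    rw [key h hh, hr h hh]
    ring
  · -- big-O
    rw [isBigO_iff]
    refine ⟨L * M * (∫ t, |t| * K t) + 2 * B * (∫ t, K t), ?_⟩
    have hε : (0:ℝ) < min 1 T⁻¹ := lt_min one_pos (inv_pos.mpr (lt_of_lt_of_le one_pos hT1))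
    filter_upwards [Ioc_mem_nhdsGT_of_mem (by exact ⟨le_refl 0, hε⟩ : (0:ℝ) ∈ Set.Ico 0 (min 1 T⁻¹))] with h hh
    obtain ⟨hh0, hh1⟩ := hh
    have hhle1 : h ≤ 1 := le_trans hh1 (min_le_left _ _)
    have hhleT : h ≤ T⁻¹ := le_trans hh1 (min_le_right _ _)
    have hne : h ≠ 0 := ne_of_gt hh0
    rw [key h hh0]
    have hnorm1 : ‖(1:ℝ)‖ = 1 := by norm_num
    rw [hnorm1, mul_one]
    have e2 : h⁻¹ * (∫ u, (K u)^2) * f x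
        - h⁻¹ * (∫ t, (K t)^2 * (f x - f (x - h * t)))
        - h⁻¹ * (∫ u, (K u)^2) * f x
        = -(h⁻¹ * ∫ t, (K t)^2 * (f x - f (x - h * t))) := by ring
    rw [e2, norm_neg]
    rw [← integral_const_mul]
    -- dominating function
    set D : ℝ → ℝ := fun t => L * M * (|t| * K t) + 2 * B * K t with hD
    have hDint : Integrable D := (hKabs.const_mul (L*M)).add (hKint.const_mul (2*B))
    have hDbd : ∀ t : ℝ, ‖h⁻¹ * ((K t)^2 * (f x - f (x - h * t)))‖ ≤ D t := by
      intro t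
      rw [Real.norm_eq_abs]
      rcases le_or_gt (h * |t|) 1 with hcase | hcase
      · -- small t : use the integral form
        have hI : |∫ w in (0:ℝ)..1, deriv f (x - h * t * w)| ≤ L := by
          have := intervalIntegral.norm_integral_le_of_norm_le_const
            (C := L) (f := fun w => deriv f (x - h * t * w)) (a := (0:ℝ)) (b := 1) ?_
          · simpa using this
          · intro w hw
            rw [Set.uIoc_of_le (by norm_num : (0:ℝ) ≤ 1)] at hw
            obtain ⟨hw0, hw1⟩ := hw
            refine hL _ ?_
            have habs : |h * t * w| ≤ 1 := by
              rw [abs_mul, abs_mul, abs_of_pos hh0, abs_of_pos hw0]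
              calc h * |t| * w ≤ h * |t| * 1 := by
                    have := mul_le_mul_of_nonneg_left hw1
                      (mul_nonneg (le_of_lt hh0) (abs_nonneg t))
                    linarith
                _ ≤ 1 := by linarith
            rw [abs_le] at habs
            constructor <;> [linarith [habs.2]; linarith [habs.1]]
        have heq : h⁻¹ * ((K t)^2 * (f x - f (x - h * t)))
            = t * (K t)^2 * ∫ w in (0:ℝ)..1, deriv f (x - h * t * w) := by
          rw [hg h t]
          set I := ∫ w in (0:ℝ)..1, deriv f (x - h * t * w) with hIdef
          field_simp
        rw [heq]
        rw [abs_mul, abs_mul, abs_of_nonneg (by positivity : (0:ℝ) ≤ (K t)^2)]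
        have hb1 : |t| * (K t)^2 * |∫ w in (0:ℝ)..1, deriv f (x - h * t * w)|
            ≤ |t| * (K t)^2 * L :=
          mul_le_mul_of_nonneg_left hI (by positivity)
        have hb2 : |t| * (K t)^2 * L ≤ L * M * (|t| * K t) := by
          nlinarith [mul_nonneg (mul_nonneg (mul_nonneg hLnn (abs_nonneg t))
            (hKnonneg t)) (sub_nonneg.mpr (hKbd t))]
        have hb3 : (0:ℝ) ≤ 2 * B * K t :=
          mul_nonneg (by linarith : (0:ℝ) ≤ 2 * B) (hKnonneg t)
        simp only [hD]
        linarith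
      · -- large t : use the tail bound
        have hTt : T ≤ |t| := by
          have h1 : 1 < h * |t| := hcase
          have h2 : h * |t| ≤ T⁻¹ * |t| := mul_le_mul_of_nonneg_right hhleT (abs_nonneg t)
          have hTpos : (0:ℝ) < T := lt_of_lt_of_le one_pos hT1
          have : 1 < T⁻¹ * |t| := lt_of_lt_of_le h1 h2
          calc T = T * 1 := (mul_one T).symm
            _ ≤ T * (T⁻¹ * |t|) := by nlinarith
            _ = |t| := by field_simp
        have hKt : K t ≤ 1 / t ^ 2 := hT t hTt
        have ht2 : 1 / t ^ 2 ≤ h ^ 2 := by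
          have ht0 : (0:ℝ) < t ^ 2 := by
            nlinarith [sq_abs t, hTt, hT1, abs_nonneg t]
          rw [div_le_iff₀ ht0]
          nlinarith [hcase, sq_abs t, abs_nonneg t, hh0.le]
        have hbd : |h⁻¹ * ((K t)^2 * (f x - f (x - h * t)))| ≤ 2 * B * K t := by
          rw [abs_mul, abs_mul, abs_of_nonneg (by positivity : (0:ℝ) ≤ (K t)^2),
            abs_of_pos (inv_pos.mpr hh0)]
          have hfb : |f x - f (x - h * t)| ≤ 2 * B := by
            calc |f x - f (x - h * t)| ≤ |f x| + |f (x - h*t)| := abs_sub _ _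
              _ ≤ 2 * B := by linarith [hB x, hB (x - h*t)]
          have hK2le : (K t)^2 ≤ h^2 * K t := by
            have := hKnonneg t
            nlinarith
          calc h⁻¹ * ((K t)^2 * |f x - f (x - h * t)|)
              ≤ h⁻¹ * ((h^2 * K t) * (2 * B)) := by
                apply mul_le_mul_of_nonneg_left _ (le_of_lt (inv_pos.mpr hh0))
                apply mul_le_mul hK2le hfb (abs_nonneg _)
                  (mul_nonneg (sq_nonneg h) (hKnonneg t))
            _ = h * (2 * B * K t) := by field_simp
            _ ≤ 1 * (2 * B * K t) := by
                apply mul_le_mul_of_nonneg_right hhle1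
                  (mul_nonneg (by linarith : (0:ℝ) ≤ 2 * B) (hKnonneg t))
            _ = 2 * B * K t := one_mul _
        have hpos : (0:ℝ) ≤ L * M * (|t| * K t) :=
          mul_nonneg (mul_nonneg hLnn hM0) (mul_nonneg (abs_nonneg t) (hKnonneg t))
        simp only [hD]
        linarith
    have hb := norm_integral_le_of_norm_le hDint (ae_of_all _ hDbd)
    refine le_trans hb ?_
    rw [hD, integral_add (hKabs.const_mul (L*M)) (hKint.const_mul (2*B)),
      integral_const_mul, integral_const_mul]
end
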